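/- For Lebesgue-almost every x ∈ K there exist N ≥ 1, a finite word (i_1,…,i_N) ∈ {1,…,m}^N, and k ∈ {1,…,s} such that T_{i_1…i_N}(x) lies in the open interval (a_k, b_k), the interior of the switch region H_k. -/

import Mathlib

open Filter Topology Set MeasureTheory Pointwise

/-- Apply `T_{i₁…i_N}` (i.e. `T_{i_N} ∘ ⋯ ∘ T_{i₁}`) to `x`. -/
noncomputable def invIterWord (m : ℕ) (T : Fin m → ℝ → ℝ) (w : List (Fin m)) (x : ℝ) : ℝ :=
  w.foldl (fun y j => T j y) x

namespace Stmt4Aux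

/-- Forward composition `f_{w₁} ∘ ⋯ ∘ f_{w_n}`. -/
def fwd (m : ℕ) (f : Fin m → ℝ → ℝ) (w : List (Fin m)) (y : ℝ) : ℝ :=
  w.foldr (fun j z => f j z) y

theorem invIterWord_cons (m : ℕ) (T : Fin m → ℝ → ℝ) (j : Fin m) (w : List (Fin m)) (x : ℝ) :
    invIterWord m T (j :: w) x = invIterWord m T w (T j x) := rfl

theorem invIterWord_append (m : ℕ) (T : Fin m → ℝ → ℝ) (w₁ w₂ : List (Fin m)) (x : ℝ) :
    invIterWord m T (w₁ ++ w₂) x = invIterWord m T w₂ (invIterWord m T w₁ x) := by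
  simp [invIterWord, List.foldl_append]

theorem fwd_cons (m : ℕ) (f : Fin m → ℝ → ℝ) (j : Fin m) (w : List (Fin m)) (y : ℝ) :
    fwd m f (j :: w) y = f j (fwd m f w y) := rfl

theorem invIterWord_fwd (m : ℕ) (T f : Fin m → ℝ → ℝ)
    (hTf : ∀ j x, T j (f j x) = x) :
    ∀ (w : List (Fin m)) (y : ℝ), invIterWord m T w (fwd m f w y) = y := by
  intro w
  induction w with
  | nil => intro y; rfl
  | cons j w ih =>
    intro y
    rw [fwd_cons, invIterWord_cons, hTf]
    exact ih y

theorem continuous_invIterWord (m : ℕ) (T : Fin m → ℝ → ℝ)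
    (hTc : ∀ j, Continuous (T j)) :
    ∀ w : List (Fin m), Continuous (invIterWord m T w) := by
  intro w
  induction w with
  | nil => exact continuous_id
  | cons j w ih => exact ih.comp (hTc j)

/-- Volume scaling for an affine image on `ℝ`. -/
theorem volume_affine_image (p q : ℝ) (hp : 0 ≤ p) (S : Set ℝ) :
    volume ((fun x => p * x + q) '' S) = ENNReal.ofReal p * volume S := by
  have h1 : (fun x => p * x + q) '' S = q +ᵥ (p • S) := by
    rw [← Set.image_vadd, ← Set.image_smul, Set.image_image]
    simp only [smul_eq_mul, vadd_eq_add]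
    exact Set.image_congr fun x _ => by ring
  rw [h1, measure_vadd, Measure.addHaar_smul_of_nonneg volume hp,
    Module.finrank_self, pow_one]

end Stmt4Aux

open Stmt4Aux

/-- for Lebesgue-almost every `x ∈ K` some finite composition of the
inverse maps sends `x` into the interior of a switch region. -/
theorem stmt4 (m : ℕ) (hm : 2 ≤ m) (r c : Fin m → ℝ)
    (hr : ∀ j, 0 < r j ∧ r j < 1)
    (f : Fin m → ℝ → ℝ) (hf : ∀ j x, f j x = r j * x + c j)
    (T : Fin m → ℝ → ℝ) (hT : ∀ j x, T j x = (x - c j) / r j)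
    (A B : ℝ) (hAB : A < B)
    (K : Set ℝ) (hK : K = Icc A B) (hKattr : K = ⋃ j, f j '' K)
    (s : ℕ) (hs : 1 ≤ s)
    (ik jk : Fin s → Fin m) (hkne : ∀ k, ik k ≠ jk k)
    (aH bH : Fin s → ℝ)
    (hH : ∀ k, f (ik k) '' K ∩ f (jk k) '' K = Icc (aH k) (bH k))
    (hHnd : ∀ k, aH k < bH k)
    (hHint : ∀ k, Icc (aH k) (bH k) ⊆ Ioo A B)
    (hHdisj : ∀ k l, k ≠ l → Disjoint (Icc (aH k) (bH k)) (Icc (aH l) (bH l)))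
    (hcomplete : ∀ p q : Fin m, p ≠ q → (f p '' K ∩ f q '' K).Nonempty →
      ∃ k, (p = ik k ∧ q = jk k) ∨ (p = jk k ∧ q = ik k)) :
    ∀ᵐ x ∂(volume : Measure ℝ), x ∈ K →
      ∃ w : List (Fin m), w ≠ [] ∧ ∃ k : Fin s,
        invIterWord m T w x ∈ Ioo (aH k) (bH k) := by
  have hr0 : ∀ j, (0:ℝ) < r j := fun j => (hr j).1
  have hTf : ∀ j x, T j (f j x) = x := by
    intro j x
    rw [hf, hT, add_sub_cancel_right, mul_comm, mul_div_assoc, div_self (hr0 j).ne', mul_one]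
  have hTc : ∀ j, Continuous (T j) := by
    intro j
    have : T j = fun x => (x - c j) / r j := funext (hT j)
    rw [this]
    exact (continuous_id.sub continuous_const).div_const _
  -- the union of the open switch intervals
  set O : Set ℝ := ⋃ k, Ioo (aH k) (bH k) with hO
  -- the "totally bad" set: every word (including the empty one) avoids O
  set E : Set ℝ := {x | ∀ w : List (Fin m), invIterWord m T w x ∉ O} with hE
  set F : Set ℝ := E ∩ K with hF
  have hOopen : IsOpen O := isOpen_iUnion fun k => isOpen_Ioo
  have hEclosed : IsClosed E := by
    have h1 : E = ⋂ w : List (Fin m), invIterWord m T w ⁻¹' Oᶜ := by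
      ext x
      simp [hE, Set.mem_iInter]
    rw [h1]
    exact isClosed_iInter fun w =>
      (hOopen.isClosed_compl).preimage (continuous_invIterWord m T hTc w)
  have hFmeas : MeasurableSet F :=
    (hEclosed.inter (hK ▸ isClosed_Icc)).measurableSet
  have hL : (0:ℝ) < B - A := sub_pos.mpr hAB
  -- the product of ratios along a word
  have hP : ∀ w : List (Fin m), 0 < (w.map r).prod := by
    intro w
    apply List.prod_pos
    intro x hx
    obtain ⟨j, _, rfl⟩ := List.mem_map.mp hx
    exact hr0 j
  -- affine form of fwd
  have hsub : ∀ (w : List (Fin m)) (x y : ℝ),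
      fwd m f w x - fwd m f w y = (w.map r).prod * (x - y) := by
    intro w
    induction w with
    | nil => intro x y; simp [fwd]
    | cons j w ih =>
      intro x y
      rw [fwd_cons, fwd_cons, hf, hf, List.map_cons, List.prod_cons]
      rw [mul_assoc, ← ih x y]
      ring
  have hform : ∀ (w : List (Fin m)) (x : ℝ),
      fwd m f w x = (w.map r).prod * x + fwd m f w 0 := by
    intro w x
    have := hsub w x 0
    rw [sub_zero] at this
    linarith
  -- image of a set under fwd
  have himg : ∀ (w : List (Fin m)) (S : Set ℝ),
      volume (fwd m f w '' S) = ENNReal.ofReal ((w.map r).prod) * volume S := by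
    intro w S
    have h1 : fwd m f w '' S = (fun x => (w.map r).prod * x + fwd m f w 0) '' S :=
      Set.image_congr fun x _ => hform w x
    rw [h1, volume_affine_image _ _ (hP w).le]
  -- the covering of K by cylinders of depth n
  have hcover : ∀ (n : ℕ) (x : ℝ), x ∈ K →
      ∃ w : List (Fin m), w.length = n ∧ ∃ y ∈ K, fwd m f w y = x := by
    intro n
    induction n with
    | zero => intro x hx; exact ⟨[], rfl, x, hx, rfl⟩
    | succ n ih =>
      intro x hx
      rw [hKattr] at hx
      obtain ⟨j, y, hy, rfl⟩ := by
        simpa [Set.mem_iUnion] using hx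
      obtain ⟨w, hwlen, z, hz, hwz⟩ := ih y hy
      exact ⟨j :: w, by simp [hwlen], z, hz, by rw [fwd_cons, hwz]⟩
  -- membership of F in cylinders pulls back into F
  have hpull : ∀ (w : List (Fin m)), F ∩ fwd m f w '' K ⊆ fwd m f w '' F := by
    intro w x hx
    obtain ⟨⟨hxE, _⟩, z, hzK, hzx⟩ := hx
    refine ⟨z, ⟨?_, hzK⟩, hzx⟩
    intro w' hw'
    have hz : z = invIterWord m T w x := by rw [← hzx, invIterWord_fwd m T f hTf]
    apply hxE (w ++ w')
    rw [invIterWord_append, ← hz]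
    exact hw'
  -- F avoids the first switch interval, so its measure is less than that of K
  haveI : NeZero s := ⟨by omega⟩
  set k0 : Fin s := ⟨0, by omega⟩ with hk0
  have hFsub : F ⊆ Icc A B \ Ioo (aH k0) (bH k0) := by
    intro x hx
    obtain ⟨hxE, hxK⟩ := hx
    refine ⟨hK ▸ hxK, fun hxI => ?_⟩
    exact hxE [] (Set.mem_iUnion.mpr ⟨k0, hxI⟩)
  have hIooK : Ioo (aH k0) (bH k0) ⊆ Icc A B := fun x hx =>
    Icc_subset_Icc (le_of_lt (hHint k0 ⟨le_refl _, (hHnd k0).le⟩).1)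
      ((hHint k0 ⟨(hHnd k0).le, le_refl _⟩).2.le) ⟨hx.1.le, hx.2.le⟩
  have hFfin : volume F ≠ ⊤ := by
    apply ne_top_of_le_ne_top _ (measure_mono (hFsub.trans (Set.diff_subset)))
    rw [Real.volume_Icc]
    exact ENNReal.ofReal_ne_top
  have hFlt : volume F < ENNReal.ofReal (B - A) := by
    calc volume F ≤ volume (Icc A B \ Ioo (aH k0) (bH k0)) := measure_mono hFsub
      _ = volume (Icc A B) - volume (Ioo (aH k0) (bH k0)) := by
          rw [measure_diff hIooK measurableSet_Ioo.nullMeasurableSet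
            (by rw [Real.volume_Ioo]; exact ENNReal.ofReal_ne_top)]
      _ < volume (Icc A B) := by
          rw [Real.volume_Icc, Real.volume_Ioo]
          exact ENNReal.sub_lt_self ENNReal.ofReal_ne_top
            (by simp [hAB]) (by simp [hHnd k0])
      _ = ENNReal.ofReal (B - A) := Real.volume_Icc
  set V : ℝ := (volume F).toReal with hVdef
  have hV0 : 0 ≤ V := ENNReal.toReal_nonneg
  have hVF : volume F = ENNReal.ofReal V := (ENNReal.ofReal_toReal hFfin).symm
  have hVlt : V < B - A := by
    have := ENNReal.toReal_strict_mono ENNReal.ofReal_ne_top hFlt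
    rwa [ENNReal.toReal_ofReal hL.le] at this
  -- the main step: F is null
  have hF0 : volume F = 0 := by
    by_contra hF0
    -- density point
    have hdens := Besicovitch.ae_tendsto_measure_inter_div (volume : Measure ℝ) F
    have hne : (volume.restrict F) ≠ 0 := by
      intro h0
      apply hF0
      rw [← Measure.restrict_apply_univ F, h0]
      simp
    haveI : (ae (volume.restrict F)).NeBot := ae_neBot.mpr hne
    obtain ⟨x₀, hx₀F, hx₀d⟩ := ((ae_restrict_mem hFmeas).and hdens).exists
    have hx₀K : x₀ ∈ K := hx₀F.2
    -- contraction ratio bound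
    have hmpos : 0 < m := by omega
    haveI : NeZero m := ⟨by omega⟩
    set j₀ : Fin m := ⟨0, hmpos⟩
    set ρ : ℝ := Finset.univ.sup' Finset.univ_nonempty r with hρdef
    have hρ1 : ρ < 1 := by
      rw [hρdef, Finset.sup'_lt_iff]
      exact fun j _ => (hr j).2
    have hρ0 : 0 < ρ :=
      lt_of_lt_of_le (hr0 j₀) (Finset.le_sup' r (Finset.mem_univ j₀))
    have hPρ : ∀ w : List (Fin m), (w.map r).prod ≤ ρ ^ w.length := by
      intro w
      induction w with
      | nil => simp
      | cons j w ih =>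
        rw [List.map_cons, List.prod_cons, List.length_cons, pow_succ]
        rw [mul_comm (ρ ^ w.length) ρ]
        exact mul_le_mul (Finset.le_sup' r (Finset.mem_univ j)) ih
          (le_of_lt (hP w)) hρ0.le
    -- choose words through x₀
    choose wfun hwlen hwmem using fun n => hcover n x₀ hx₀K
    set ℓ : ℕ → ℝ := fun n => ((wfun n).map r).prod * (B - A) with hℓdef
    have hℓpos : ∀ n, 0 < ℓ n := fun n => mul_pos (hP (wfun n)) hL
    have hℓle : ∀ n, ℓ n ≤ ρ ^ n * (B - A) := fun n => by
      apply mul_le_mul_of_nonneg_right _ hL.le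
      have h2 := hPρ (wfun n)
      rwa [hwlen n] at h2
    have hℓ0 : Tendsto ℓ atTop (𝓝[>] 0) := by
      rw [tendsto_nhdsWithin_iff]
      constructor
      · apply squeeze_zero (fun n => (hℓpos n).le) hℓle
        have := (tendsto_pow_atTop_nhds_zero_of_lt_one hρ0.le hρ1).mul_const (B - A)
        rwa [zero_mul] at this
      · exact Filter.Eventually.of_forall fun n => hℓpos n
    set cst : ℝ := (V / (B - A) + 1) / 2 with hcst
    have hcst1 : cst < 1 := by
      rw [hcst]
      have : V / (B - A) < 1 := (div_lt_one hL).mpr hVlt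
      linarith
    -- the density bound at each scale ℓ n
    have hbound : ∀ n,
        volume (F ∩ Metric.closedBall x₀ (ℓ n)) / volume (Metric.closedBall x₀ (ℓ n))
          ≤ ENNReal.ofReal cst := by
      intro n
      set w := wfun n with hw
      set P : ℝ := (w.map r).prod with hPw
      set Q : ℝ := fwd m f w 0 with hQ
      set J : Set ℝ := fwd m f w '' K with hJ
      obtain ⟨y₀, hy₀K, hy₀⟩ := hwmem n
      have hx₀J : x₀ ∈ J := ⟨y₀, hy₀K, hy₀⟩
      have hJcb : J ⊆ Metric.closedBall x₀ (ℓ n) := by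
        rintro z ⟨u, huK, rfl⟩
        rw [Metric.mem_closedBall, Real.dist_eq, ← hy₀, hsub w u y₀]
        rw [abs_mul, abs_of_pos (hP w)]
        apply mul_le_mul_of_nonneg_left _ (hP w).le
        rw [hK] at huK hy₀K
        rw [abs_sub_le_iff]
        obtain ⟨h1, h2⟩ := huK
        obtain ⟨h3, h4⟩ := hy₀K
        constructor <;> linarith
      have hJicc : J = Icc (P * A + Q) (P * B + Q) := by
        rw [hJ, hK]
        have h1 : fwd m f w '' Icc A B = (fun x => P * x + Q) '' Icc A B :=
          Set.image_congr fun x _ => hform w x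
        rw [h1]
        exact image_affine_Icc' (hP w) Q A B
      have hJmeas : MeasurableSet J := by rw [hJicc]; exact measurableSet_Icc
      have hJvol : volume J = ENNReal.ofReal (ℓ n) := by
        rw [hJicc, Real.volume_Icc, hℓdef]
        congr 1
        ring
      have hFJ : volume (F ∩ J) ≤ ENNReal.ofReal (P * V) := by
        calc volume (F ∩ J) ≤ volume (fwd m f w '' F) := measure_mono (hpull w)
          _ = ENNReal.ofReal P * volume F := himg w F
          _ = ENNReal.ofReal (P * V) := by
              rw [hVF, ← ENNReal.ofReal_mul (hP w).le]
      have hsplit : volume (F ∩ Metric.closedBall x₀ (ℓ n))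
          ≤ ENNReal.ofReal (P * (V + (B - A))) := by
        have h1 : F ∩ Metric.closedBall x₀ (ℓ n) ⊆ (F ∩ J) ∪
            (Metric.closedBall x₀ (ℓ n) \ J) := by
          intro x hx
          by_cases hxJ : x ∈ J
          · exact Or.inl ⟨hx.1, hxJ⟩
          · exact Or.inr ⟨hx.2, hxJ⟩
        calc volume (F ∩ Metric.closedBall x₀ (ℓ n))
            ≤ volume ((F ∩ J) ∪ (Metric.closedBall x₀ (ℓ n) \ J)) := measure_mono h1
          _ ≤ volume (F ∩ J) + volume (Metric.closedBall x₀ (ℓ n) \ J) :=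
              measure_union_le _ _
          _ ≤ ENNReal.ofReal (P * V) + ENNReal.ofReal (ℓ n) := by
              apply add_le_add hFJ
              rw [measure_diff hJcb hJmeas.nullMeasurableSet
                (by rw [hJvol]; exact ENNReal.ofReal_ne_top),
                Real.volume_closedBall, hJvol,
                ← ENNReal.ofReal_sub _ (hℓpos n).le]
              apply ENNReal.ofReal_le_ofReal
              linarith
          _ = ENNReal.ofReal (P * (V + (B - A))) := by
              rw [← ENNReal.ofReal_add (mul_nonneg (hP w).le hV0) (hℓpos n).le, hℓdef]
              congr 1
              ring
      apply ENNReal.div_le_of_le_mul'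
      rw [Real.volume_closedBall, ← ENNReal.ofReal_mul (mul_nonneg (by norm_num) (hℓpos n).le)]
      apply hsplit.trans
      apply ENNReal.ofReal_le_ofReal
      have : cst * (2 * ℓ n) = P * (V + (B - A)) := by
        rw [hcst, hℓdef]
        field_simp
        ring
      linarith [this]
    -- contradiction with the density theorem
    have hcomp : Tendsto (fun n =>
        volume (F ∩ Metric.closedBall x₀ (ℓ n)) / volume (Metric.closedBall x₀ (ℓ n)))
        atTop (𝓝 1) := hx₀d.comp hℓ0
    have h1le : (1 : ENNReal) ≤ ENNReal.ofReal cst := le_of_tendsto' hcomp hbound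
    have : ENNReal.ofReal cst < 1 := ENNReal.ofReal_lt_one.mpr hcst1
    exact absurd h1le this.not_ge
  -- conclusion: the bad set is contained in ⋃ j, f j '' F, which is null
  rw [ae_iff]
  refine measure_mono_null (t := ⋃ j, f j '' F) ?_ ?_
  · intro x hx
    simp only [Set.mem_setOf_eq] at hx
    push_neg at hx
    obtain ⟨hxK, hxbad⟩ := hx
    have hx' : x ∈ ⋃ j, f j '' K := hKattr ▸ hxK
    obtain ⟨j, y, hyK, hyx⟩ := by simpa [Set.mem_iUnion] using hx'
    refine Set.mem_iUnion.mpr ⟨j, y, ⟨?_, hyK⟩, hyx⟩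
    intro w' hw'
    obtain ⟨k, hk⟩ := Set.mem_iUnion.mp hw'
    have hy : y = T j x := by rw [← hyx, hTf]
    have : invIterWord m T (j :: w') x ∈ Ioo (aH k) (bH k) := by
      rw [invIterWord_cons, ← hy]
      exact hk
    exact absurd this (hxbad (j :: w') (by simp) k)
  · apply measure_iUnion_null
    intro j
    have h1 : f j '' F = (fun x => r j * x + c j) '' F :=
      Set.image_congr fun x _ => hf j x
    rw [h1, volume_affine_image _ _ (hr0 j).le, hF0, mul_zero]
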